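/- Let X₁, …, X_m be independent mean-zero random variables with E[X_j²] = v for all j, and let w, x be two closed words of length k+1 whose induced cycle graphs have the same edge set. Then E[∏_{e ∈ E_w} Y_e · ∏_{e ∈ E_x} Y_e] = v^k, where (Y_e) are i.i.d. mean-zero random variables indexed by edges with variance v. More generally, if G_w and G_x do not have identical edge sets then some edge variable appears exactly once in the product and the expectation is 0. -/

import Mathlib

open MeasureTheory ProbabilityTheory Finset

/-- The edge multiset (as a finset) of the cycle induced by a closed word `w`. -/
def cycleEdgeFinset (k : ℕ) [NeZero k] {V : Type*} [DecidableEq V]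
    (w : ZMod k → V) : Finset (Sym2 V) :=
  Finset.image (fun j : ZMod k => s(w j, w (j + 1))) Finset.univ

/-- Integral of a finset product of independent real random variables. -/
lemma integral_finset_prod_of_iIndepFun
    {Ω : Type*} [MeasurableSpace Ω] (μ : Measure Ω) [IsProbabilityMeasure μ]
    {ι : Type*} (g : ι → Ω → ℝ) (hmeas : ∀ i, Measurable (g i))
    (hind : iIndepFun g μ) (s : Finset ι) :
    ∫ ω, ∏ i ∈ s, g i ω ∂μ = ∏ i ∈ s, ∫ ω, g i ω ∂μ := by
  classical
  refine Finset.induction_on s ?_ ?_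
  · simp
  · intro a s ha ih
    rw [Finset.prod_insert ha, ← ih]
    have hprodmeas : Measurable (fun ω => ∏ i ∈ s, g i ω) :=
      Finset.measurable_prod s fun i _ => hmeas i
    have hI : IndepFun (g a) (fun ω => ∏ i ∈ s, g i ω) μ := by
      have h := (hind.indepFun_finsetProd_of_notMem hmeas ha).symm
      have heq : (∏ j ∈ s, g j) = fun ω => ∏ i ∈ s, g i ω := by
        funext ω; simp [Finset.prod_apply]
      rwa [heq] at h
    calc ∫ ω, ∏ i ∈ insert a s, g i ω ∂μ
        = ∫ ω, g a ω * ∏ i ∈ s, g i ω ∂μ := by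
          congr 1; funext ω; rw [Finset.prod_insert ha]
      _ = (∫ ω, g a ω ∂μ) * ∫ ω, ∏ i ∈ s, g i ω ∂μ :=
          hI.integral_fun_mul_eq_mul_integral (hmeas a).aestronglyMeasurable hprodmeas.aestronglyMeasurable

lemma cycleEdgeFinset_card (k : ℕ) [NeZero k] (hk : 3 ≤ k) {V : Type*} [DecidableEq V]
    (w : ZMod k → V) (hw : Function.Injective w) : (cycleEdgeFinset k w).card = k := by
  have hinj : Function.Injective (fun j : ZMod k => s(w j, w (j + 1))) := by
    intro i j h
    simp only [Sym2.eq_iff] at h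
    rcases h with ⟨h1, _⟩ | ⟨h1, h2⟩
    · exact hw h1
    · have hi : i = j + 1 := hw h1
      have hj : i + 1 = j := hw h2
      have h2z : (2 : ZMod k) = 0 := by linear_combination hj - hi
      have : (k : ℕ) ∣ 2 := by
        have := (ZMod.natCast_eq_zero_iff 2 k).mp (by exact_mod_cast h2z)
        exact this
      have := Nat.le_of_dvd (by norm_num) this
      omega
  rw [cycleEdgeFinset, Finset.card_image_of_injective _ hinj, Finset.card_univ, ZMod.card]

theorem paired_words_expectation
    {Ω : Type*} [MeasurableSpace Ω] (μ : Measure Ω) [IsProbabilityMeasure μ]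
    {V : Type*} [MeasurableSpace (Sym2 V)] [DecidableEq V]
    (k : ℕ) [NeZero k] (hk : 3 ≤ k) (v : ℝ)
    (Y : Sym2 V → Ω → ℝ)
    (hmeas : ∀ e, Measurable (Y e))
    (hL2 : ∀ e, MemLp (Y e) 2 μ)
    (hindep : iIndepFun Y μ)
    (hmean : ∀ e, ∫ ω, Y e ω ∂μ = 0)
    (hvar : ∀ e, ∫ ω, (Y e ω) ^ 2 ∂μ = v)
    (w x : ZMod k → V) (hw : Function.Injective w) (hx : Function.Injective x) :
    (cycleEdgeFinset k w = cycleEdgeFinset k x →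
      ∫ ω, (∏ e ∈ cycleEdgeFinset k w, Y e ω) * (∏ e ∈ cycleEdgeFinset k x, Y e ω) ∂μ
        = v ^ k) ∧
    (cycleEdgeFinset k w ≠ cycleEdgeFinset k x →
      ∫ ω, (∏ e ∈ cycleEdgeFinset k w, Y e ω) * (∏ e ∈ cycleEdgeFinset k x, Y e ω) ∂μ
        = 0) := by
  classical
  set Ew := cycleEdgeFinset k w with hEw
  set Ex := cycleEdgeFinset k x with hEx
  set I := Ew ∩ Ex with hI
  -- the function applied to each edge variable
  set φ : Sym2 V → ℝ → ℝ := fun e => if e ∈ I then (fun t => t * t) else id with hφ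
  set g : Sym2 V → Ω → ℝ := fun e => φ e ∘ Y e with hg
  have hφmeas : ∀ e, Measurable (φ e) := by
    intro e
    by_cases he : e ∈ I
    · simpa [hφ, he] using (by fun_prop : Measurable fun t : ℝ => t * t)
    · simpa [hφ, he] using measurable_id
  have hgmeas : ∀ e, Measurable (g e) := fun e => (hφmeas e).comp (hmeas e)
  have hgind : iIndepFun g μ := hindep.comp φ hφmeas
  -- pointwise product identity
  have hprod : ∀ ω, (∏ e ∈ Ew, Y e ω) * (∏ e ∈ Ex, Y e ω) = ∏ e ∈ Ew ∪ Ex, g e ω := by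
    intro ω
    have hEwsplit : Ew = (Ew \ Ex) ∪ I := by
      rw [hI]; exact (Finset.sdiff_union_inter Ew Ex).symm
    have hExsplit : Ex = (Ex \ Ew) ∪ I := by
      rw [hI, Finset.inter_comm]; exact (Finset.sdiff_union_inter Ex Ew).symm
    have hUsplit : Ew ∪ Ex = (Ew \ Ex) ∪ ((Ex \ Ew) ∪ I) := by
      rw [hI]
      ext e
      simp only [Finset.mem_union, Finset.mem_sdiff, Finset.mem_inter]
      tauto
    have hd1 : Disjoint (Ew \ Ex) I := by
      rw [hI]
      exact Finset.disjoint_left.mpr fun e he hei =>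
        (Finset.mem_sdiff.mp he).2 (Finset.mem_inter.mp hei).2
    have hd2 : Disjoint (Ex \ Ew) I := by
      rw [hI]
      exact Finset.disjoint_left.mpr fun e he hei =>
        (Finset.mem_sdiff.mp he).2 (Finset.mem_inter.mp hei).1
    have hd3 : Disjoint (Ew \ Ex) ((Ex \ Ew) ∪ I) := by
      refine Finset.disjoint_union_right.mpr ⟨?_, hd1⟩
      exact Finset.disjoint_left.mpr fun e he hei =>
        (Finset.mem_sdiff.mp hei).2 (Finset.mem_sdiff.mp he).1
    have hgI : ∀ e ∈ I, g e ω = Y e ω * Y e ω := by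
      intro e he; simp [hg, hφ, he]
    have hgW : ∀ e ∈ Ew \ Ex, g e ω = Y e ω := by
      intro e he
      have : e ∉ I := fun h => (Finset.mem_sdiff.mp he).2 (Finset.mem_inter.mp h).2
      simp [hg, hφ, this]
    have hgX : ∀ e ∈ Ex \ Ew, g e ω = Y e ω := by
      intro e he
      have : e ∉ I := fun h => (Finset.mem_sdiff.mp he).2 (Finset.mem_inter.mp h).1
      simp [hg, hφ, this]
    have e1 : ∏ e ∈ Ew, Y e ω = (∏ e ∈ Ew \ Ex, Y e ω) * ∏ e ∈ I, Y e ω := by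
      rw [← Finset.prod_union hd1, ← hEwsplit]
    have e2 : ∏ e ∈ Ex, Y e ω = (∏ e ∈ Ex \ Ew, Y e ω) * ∏ e ∈ I, Y e ω := by
      rw [← Finset.prod_union hd2, ← hExsplit]
    have e3 : ∏ e ∈ I, Y e ω * Y e ω = (∏ e ∈ I, Y e ω) * ∏ e ∈ I, Y e ω :=
      Finset.prod_mul_distrib
    calc (∏ e ∈ Ew, Y e ω) * (∏ e ∈ Ex, Y e ω)
        = ((∏ e ∈ Ew \ Ex, Y e ω) * ∏ e ∈ I, Y e ω) *
          ((∏ e ∈ Ex \ Ew, Y e ω) * ∏ e ∈ I, Y e ω) := by rw [e1, e2]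
      _ = (∏ e ∈ Ew \ Ex, Y e ω) * ((∏ e ∈ Ex \ Ew, Y e ω) * ∏ e ∈ I, Y e ω * Y e ω) := by
          rw [e3]; ring
      _ = (∏ e ∈ Ew \ Ex, g e ω) * ((∏ e ∈ Ex \ Ew, g e ω) * ∏ e ∈ I, g e ω) := by
          rw [Finset.prod_congr rfl hgW, Finset.prod_congr rfl hgX,
            Finset.prod_congr rfl fun e he => (hgI e he).symm]
      _ = ∏ e ∈ Ew ∪ Ex, g e ω := by
          rw [hUsplit, Finset.prod_union hd3, Finset.prod_union hd2]
  have hint : ∫ ω, (∏ e ∈ Ew, Y e ω) * (∏ e ∈ Ex, Y e ω) ∂μ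
      = ∏ e ∈ Ew ∪ Ex, ∫ ω, g e ω ∂μ := by
    rw [show (fun ω => (∏ e ∈ Ew, Y e ω) * (∏ e ∈ Ex, Y e ω))
        = fun ω => ∏ e ∈ Ew ∪ Ex, g e ω from funext hprod]
    exact integral_finset_prod_of_iIndepFun μ g hgmeas hgind _
  constructor
  · intro heq
    have hIeq : I = Ew := by rw [hI, heq, Finset.inter_self]
    have hUeq : Ew ∪ Ex = Ew := by rw [heq, Finset.union_self]
    rw [hint, hUeq]
    have : ∀ e ∈ Ew, ∫ ω, g e ω ∂μ = v := by
      intro e he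
      have heI : e ∈ I := hIeq ▸ he
      have : g e = fun ω => (Y e ω) ^ 2 := by
        funext ω; simp [hg, hφ, heI, sq]
      rw [this, hvar e]
    rw [Finset.prod_congr rfl this, Finset.prod_const,
      cycleEdgeFinset_card k hk w hw]
  · intro hne
    have : ∃ e₀, e₀ ∈ Ew ∪ Ex ∧ e₀ ∉ I := by
      by_contra hcon
      push_neg at hcon
      apply hne
      ext e
      constructor
      · intro he
        exact (Finset.mem_inter.mp (hcon e (Finset.mem_union_left _ he) )).2
      · intro he
        exact (Finset.mem_inter.mp (hcon e (Finset.mem_union_right _ he))).1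
    obtain ⟨e₀, he₀U, he₀I⟩ := this
    rw [hint]
    apply Finset.prod_eq_zero he₀U
    have : g e₀ = Y e₀ := by funext ω; simp [hg, hφ, he₀I]
    rw [this, hmean e₀]
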